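/- Suppose Y is a geodesic metric space and c(x,·) is K-concave along geodesics uniformly in x, i.e. c(x,y_t) ≥ (1-t)c(x,y₀) + t c(x,y₁) + 2t(1-t)K d²(y₀,y₁) for every constant-speed geodesic (y_t) and all x. Then for any u ∈ L_exp^ε(ρ₁), the entropic transform u^{(c,ε)} is K-concave: u^{(c,ε)}(y_t) ≥ (1-t)u^{(c,ε)}(y₀) + t u^{(c,ε)}(y₁) + 2t(1-t)K d²(y₀,y₁). -/

import Mathlib

open MeasureTheory Real

noncomputable section

/-- The entropic `(c,ε)`-transform of `u`. -/
def transform {X Y : Type*} [MeasurableSpace X] (ρ₁ : Measure X)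
    (c : X → Y → ℝ) (ε : ℝ) (u : X → ℝ) : Y → ℝ :=
  fun y => -ε * Real.log (∫ x, Real.exp ((u x - c x y) / ε) ∂ρ₁)

/-- If `c(x, ·)` is `K`-concave along a constant-speed geodesic, uniformly in `x`, then
the entropic `(c,ε)`-transform is `K`-concave along that geodesic. -/
theorem transform_K_concave
    {X Y : Type*}
    [MeasurableSpace X] [TopologicalSpace X] [PolishSpace X] [BorelSpace X]
    [MetricSpace Y]
    (ρ₁ : Measure X) [IsProbabilityMeasure ρ₁]
    (ε : ℝ) (hε : 0 < ε)
    (c : X → Y → ℝ) (hcm : ∀ y, Measurable (fun x => c x y))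
    (u : X → ℝ) (hu : Measurable u)
    (hintc : ∀ y, Integrable (fun x => Real.exp ((u x - c x y) / ε)) ρ₁)
    (hposc : ∀ y, 0 < ∫ x, Real.exp ((u x - c x y) / ε) ∂ρ₁)
    (K : ℝ) (g : ℝ → Y)
    (hg : ∀ s t : ℝ, s ∈ Set.Icc (0:ℝ) 1 → t ∈ Set.Icc (0:ℝ) 1 →
      dist (g s) (g t) = |s - t| * dist (g 0) (g 1))
    (hconc : ∀ (x : X) (t : ℝ), t ∈ Set.Icc (0:ℝ) 1 →
      c x (g t) ≥ (1 - t) * c x (g 0) + t * c x (g 1)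
        + 2 * t * (1 - t) * K * dist (g 0) (g 1) ^ 2) :
    ∀ t : ℝ, t ∈ Set.Icc (0:ℝ) 1 →
      transform ρ₁ c ε u (g t)
        ≥ (1 - t) * transform ρ₁ c ε u (g 0) + t * transform ρ₁ c ε u (g 1)
          + 2 * t * (1 - t) * K * dist (g 0) (g 1) ^ 2 := by
  intro t ht
  obtain ⟨ht0, ht1⟩ := ht
  -- Notation
  set R : ℝ := 2 * t * (1 - t) * K * dist (g 0) (g 1) ^ 2 with hR
  set I : ℝ → ℝ := fun s => ∫ x, Real.exp ((u x - c x (g s)) / ε) ∂ρ₁ with hI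
  -- trivial endpoint cases
  rcases eq_or_lt_of_le ht0 with h0 | h0
  · simp [transform, ← h0, hR, ← hI]
  rcases eq_or_lt_of_le ht1 with h1 | h1
  · simp [transform, h1, hR, ← hI]
  have ha : 0 < 1 - t := by linarith
  -- key real inequality by Hölder
  have hmeas : ∀ s : ℝ, Measurable (fun x => Real.exp ((u x - c x (g s)) / ε)) := by
    intro s
    exact ((hu.sub (hcm (g s))).div_const ε).exp
  have hlint : ∀ s : ℝ, (∫⁻ x, ENNReal.ofReal (Real.exp ((u x - c x (g s)) / ε)) ∂ρ₁)
      = ENNReal.ofReal (I s) := by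
    intro s
    rw [← ofReal_integral_eq_lintegral_ofReal (hintc (g s))
      (Filter.Eventually.of_forall fun x => (Real.exp_pos _).le)]
  have hpq : Real.HolderConjugate (1 / (1 - t)) (1 / t) := by
    rw [Real.holderConjugate_iff]
    constructor
    · rw [lt_div_iff₀ ha]; linarith
    · rw [one_div, one_div, inv_inv, inv_inv]; ring
  have hHolder :
      (∫⁻ x, (ENNReal.ofReal (Real.exp ((u x - c x (g 0)) / ε)) ^ (1 - t)
          * ENNReal.ofReal (Real.exp ((u x - c x (g 1)) / ε)) ^ t) ∂ρ₁)
        ≤ ENNReal.ofReal (I 0) ^ (1 - t) * ENNReal.ofReal (I 1) ^ t := by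
    have := ENNReal.lintegral_mul_le_Lp_mul_Lq ρ₁ hpq
      (f := fun x => ENNReal.ofReal (Real.exp ((u x - c x (g 0)) / ε)) ^ (1 - t))
      (g := fun x => ENNReal.ofReal (Real.exp ((u x - c x (g 1)) / ε)) ^ t)
      (((hmeas 0).ennreal_ofReal.pow_const _).aemeasurable)
      (((hmeas 1).ennreal_ofReal.pow_const _).aemeasurable)
    simp only [Pi.mul_apply] at this
    calc (∫⁻ x, (ENNReal.ofReal (Real.exp ((u x - c x (g 0)) / ε)) ^ (1 - t)
          * ENNReal.ofReal (Real.exp ((u x - c x (g 1)) / ε)) ^ t) ∂ρ₁)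
        ≤ (∫⁻ x, (ENNReal.ofReal (Real.exp ((u x - c x (g 0)) / ε)) ^ (1 - t)) ^ (1/(1-t)) ∂ρ₁) ^ (1/(1/(1-t)))
          * (∫⁻ x, (ENNReal.ofReal (Real.exp ((u x - c x (g 1)) / ε)) ^ t) ^ (1/t) ∂ρ₁) ^ (1/(1/t)) := this
      _ = ENNReal.ofReal (I 0) ^ (1 - t) * ENNReal.ofReal (I 1) ^ t := by
          rw [one_div_one_div, one_div_one_div]
          congr 1
          · congr 1
            rw [← hlint 0]; apply lintegral_congr; intro x
            rw [← ENNReal.rpow_mul, mul_one_div, div_self ha.ne', ENNReal.rpow_one]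
          · congr 1
            rw [← hlint 1]; apply lintegral_congr; intro x
            rw [← ENNReal.rpow_mul, mul_one_div, div_self h0.ne', ENNReal.rpow_one]
  -- pointwise bound
  have hpt : ∀ x, Real.exp ((u x - c x (g t)) / ε)
      ≤ Real.exp (-R / ε) * (Real.exp ((u x - c x (g 0)) / ε) ^ (1 - t)
          * Real.exp ((u x - c x (g 1)) / ε) ^ t) := by
    intro x
    rw [← Real.exp_mul, ← Real.exp_mul, ← Real.exp_add, ← Real.exp_add]
    apply Real.exp_le_exp.mpr
    have h := hconc x t ⟨ht0, ht1⟩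
    have h2 : -R / ε + ((u x - c x (g 0)) / ε * (1 - t) + (u x - c x (g 1)) / ε * t)
        = (-R + ((u x - c x (g 0)) * (1 - t) + (u x - c x (g 1)) * t)) / ε := by
      field_simp
    rw [h2, div_le_div_iff_of_pos_right hε, hR]
    linarith [h]
  -- combine
  have hkey : I t ≤ Real.exp (-R / ε) * (I 0 ^ (1 - t) * I 1 ^ t) := by
    have h1 : ENNReal.ofReal (I t)
        ≤ ENNReal.ofReal (Real.exp (-R / ε)) * (ENNReal.ofReal (I 0) ^ (1 - t)
            * ENNReal.ofReal (I 1) ^ t) := by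
      rw [← hlint t]
      calc (∫⁻ x, ENNReal.ofReal (Real.exp ((u x - c x (g t)) / ε)) ∂ρ₁)
          ≤ (∫⁻ x, ENNReal.ofReal (Real.exp (-R / ε))
              * (ENNReal.ofReal (Real.exp ((u x - c x (g 0)) / ε)) ^ (1 - t)
                * ENNReal.ofReal (Real.exp ((u x - c x (g 1)) / ε)) ^ t) ∂ρ₁) := by
            apply lintegral_mono
            intro x
            have := hpt x
            calc ENNReal.ofReal (Real.exp ((u x - c x (g t)) / ε))
                ≤ ENNReal.ofReal (Real.exp (-R / ε) * (Real.exp ((u x - c x (g 0)) / ε) ^ (1 - t)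
                    * Real.exp ((u x - c x (g 1)) / ε) ^ t)) := ENNReal.ofReal_le_ofReal this
              _ = ENNReal.ofReal (Real.exp (-R / ε))
                  * (ENNReal.ofReal (Real.exp ((u x - c x (g 0)) / ε)) ^ (1 - t)
                    * ENNReal.ofReal (Real.exp ((u x - c x (g 1)) / ε)) ^ t) := by
                  rw [ENNReal.ofReal_mul (Real.exp_pos _).le,
                    ENNReal.ofReal_mul (Real.rpow_nonneg (Real.exp_pos _).le _),
                    ENNReal.ofReal_rpow_of_pos (Real.exp_pos _),
                    ENNReal.ofReal_rpow_of_pos (Real.exp_pos _)]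
        _ = ENNReal.ofReal (Real.exp (-R / ε))
            * (∫⁻ x, (ENNReal.ofReal (Real.exp ((u x - c x (g 0)) / ε)) ^ (1 - t)
                * ENNReal.ofReal (Real.exp ((u x - c x (g 1)) / ε)) ^ t) ∂ρ₁) := by
            rw [lintegral_const_mul]
            exact ((hmeas 0).ennreal_ofReal.pow_const _).mul ((hmeas 1).ennreal_ofReal.pow_const _)
        _ ≤ ENNReal.ofReal (Real.exp (-R / ε)) * (ENNReal.ofReal (I 0) ^ (1 - t)
              * ENNReal.ofReal (I 1) ^ t) := by
            exact mul_le_mul_right hHolder _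
    rw [ENNReal.ofReal_rpow_of_pos (hposc (g 0)), ENNReal.ofReal_rpow_of_pos (hposc (g 1)),
      ← ENNReal.ofReal_mul (Real.rpow_nonneg (hposc (g 0)).le _),
      ← ENNReal.ofReal_mul (Real.exp_pos _).le] at h1
    exact (ENNReal.ofReal_le_ofReal_iff (by positivity)).mp h1
  -- take logs
  have hIt : 0 < I t := hposc (g t)
  have hlog : Real.log (I t) ≤ -R / ε + ((1 - t) * Real.log (I 0) + t * Real.log (I 1)) := by
    calc Real.log (I t) ≤ Real.log (Real.exp (-R / ε) * (I 0 ^ (1 - t) * I 1 ^ t)) :=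
          Real.log_le_log hIt hkey
      _ = -R / ε + ((1 - t) * Real.log (I 0) + t * Real.log (I 1)) := by
          rw [Real.log_mul (Real.exp_pos _).ne'
              (mul_pos (Real.rpow_pos_of_pos (hposc (g 0)) _)
                (Real.rpow_pos_of_pos (hposc (g 1)) _)).ne', Real.log_exp,
            Real.log_mul (Real.rpow_pos_of_pos (hposc (g 0)) _).ne'
              (Real.rpow_pos_of_pos (hposc (g 1)) _).ne',
            Real.log_rpow (hposc (g 0)), Real.log_rpow (hposc (g 1))]
  -- conclude
  show -ε * Real.log (I t) ≥ (1 - t) * (-ε * Real.log (I 0)) + t * (-ε * Real.log (I 1)) + R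
  have hfin := mul_le_mul_of_nonneg_left hlog hε.le
  have expand : ε * (-R / ε + ((1 - t) * Real.log (I 0) + t * Real.log (I 1)))
      = -R + ε * ((1 - t) * Real.log (I 0)) + ε * (t * Real.log (I 1)) := by
    field_simp; ring
  rw [expand] at hfin
  nlinarith [hfin]

end
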